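/- For every m ≥ 3, eight times the number of words in the OP-LOCO code OPC(m) whose most significant symbol c_{m−1} equals 0 is equal to 7·|OPC(m−1)| + 4·|OPC(m−2)|. -/

import Mathlib

/-- The OP-LOCO code: words of length `m` over the alphabet `{0,...,7}`
(position `m-1` most significant) containing no contiguous subword `u 2 v` with
`u, v ∈ {0,1,4,5}` and no contiguous subword `u 5 v` with `u, v ∈ {2,3,6,7}`. -/
def OPC (m : ℕ) : Set (Fin m → Fin 8) :=
  {c | ∀ i : ℕ, ∀ h : i + 2 < m,
      ¬((c ⟨i + 2, h⟩ ∈ ({0, 1, 4, 5} : Set (Fin 8)) ∧ c ⟨i + 1, by omega⟩ = 2 ∧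
            c ⟨i, by omega⟩ ∈ ({0, 1, 4, 5} : Set (Fin 8))) ∨
        (c ⟨i + 2, h⟩ ∈ ({2, 3, 6, 7} : Set (Fin 8)) ∧ c ⟨i + 1, by omega⟩ = 5 ∧
            c ⟨i, by omega⟩ ∈ ({2, 3, 6, 7} : Set (Fin 8))))}

def Bad (u v w : Fin 8) : Prop :=
  (u ∈ ({0, 1, 4, 5} : Set (Fin 8)) ∧ v = 2 ∧ w ∈ ({0, 1, 4, 5} : Set (Fin 8))) ∨
  (u ∈ ({2, 3, 6, 7} : Set (Fin 8)) ∧ v = 5 ∧ w ∈ ({2, 3, 6, 7} : Set (Fin 8)))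

instance Bad.dec : ∀ u v w, Decidable (Bad u v w) := fun u v w =>
  decidable_of_iff
    (((u = 0 ∨ u = 1 ∨ u = 4 ∨ u = 5) ∧ v = 2 ∧ (w = 0 ∨ w = 1 ∨ w = 4 ∨ w = 5)) ∨
     ((u = 2 ∨ u = 3 ∨ u = 6 ∨ u = 7) ∧ v = 5 ∧ (w = 2 ∨ w = 3 ∨ w = 6 ∨ w = 7)))
    (by simp [Bad, Set.mem_insert_iff, Set.mem_singleton_iff])

lemma mem_OPC {m : ℕ} {c : Fin m → Fin 8} :
    c ∈ OPC m ↔ ∀ i : ℕ, ∀ h : i + 2 < m,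
      ¬ Bad (c ⟨i + 2, h⟩) (c ⟨i + 1, by omega⟩) (c ⟨i, by omega⟩) := Iff.rfl

lemma mem_OPC' {m : ℕ} {c : Fin m → Fin 8} :
    c ∈ OPC m ↔ ∀ i j k : Fin m, (j : ℕ) = (i : ℕ) + 1 → (k : ℕ) = (i : ℕ) + 2 →
      ¬ Bad (c k) (c j) (c i) := by
  rw [mem_OPC]
  constructor
  · intro H i j k hj hk
    have hk2 : (i : ℕ) + 2 < m := hk ▸ k.isLt
    rw [show k = ⟨(i : ℕ) + 2, hk2⟩ from Fin.ext hk,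
        show j = ⟨(i : ℕ) + 1, by omega⟩ from Fin.ext hj]
    exact H i hk2
  · intro H i h
    exact H ⟨i, by omega⟩ ⟨i + 1, by omega⟩ ⟨i + 2, h⟩ rfl rfl

instance OPC.dec (m : ℕ) : DecidablePred (· ∈ OPC m) := fun _ =>
  decidable_of_iff _ mem_OPC'.symm

def opcF (m : ℕ) : Finset (Fin m → Fin 8) := Finset.univ.filter (· ∈ OPC m)

lemma coe_opcF (m : ℕ) : OPC m = ↑(opcF m) := by
  ext c; simp [opcF]

lemma mem_opcF {m : ℕ} {c : Fin m → Fin 8} : c ∈ opcF m ↔ c ∈ OPC m := by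
  simp [opcF]

lemma mem_OPC_succ {n : ℕ} (c : Fin (n + 3) → Fin 8) :
    c ∈ OPC (n + 3) ↔ (fun i : Fin (n + 2) => c i.castSucc) ∈ OPC (n + 2) ∧
      ¬ Bad (c ⟨n + 2, by omega⟩) (c ⟨n + 1, by omega⟩) (c ⟨n, by omega⟩) := by
  simp only [mem_OPC]
  constructor
  · intro H
    exact ⟨fun i h => H i (by omega), H n (by omega)⟩
  · rintro ⟨H1, H2⟩ i h
    rcases Nat.lt_or_ge (i + 2) (n + 2) with h' | h'
    · exact H1 i h'
    · have hi : i = n := by omega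
      subst hi; exact H2

lemma pre {n : ℕ} (s : Fin 8) (R : (Fin (n + 2) → Fin 8) → Prop) [DecidablePred R] :
    ((opcF (n + 3)).filter
        (fun c => c ⟨n + 2, by omega⟩ = s ∧ R (fun i => c i.castSucc))).card =
      ((opcF (n + 2)).filter
        (fun d => R d ∧ ¬ Bad s (d ⟨n + 1, by omega⟩) (d ⟨n, by omega⟩))).card := by
  apply Finset.card_nbij' (fun c => fun i : Fin (n + 2) => c i.castSucc)
    (fun d => fun i : Fin (n + 3) => if h : (i : ℕ) < n + 2 then d ⟨i, h⟩ else s)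
  · intro c hc
    simp only [Finset.mem_coe, Finset.mem_filter, mem_opcF] at hc ⊢
    obtain ⟨hopc, hs, hR⟩ := hc
    rw [mem_OPC_succ] at hopc
    refine ⟨hopc.1, hR, ?_⟩
    rw [← hs]
    exact hopc.2
  · intro d hd
    simp only [Finset.mem_coe, Finset.mem_filter, mem_opcF] at hd ⊢
    obtain ⟨hopc, hR, hb⟩ := hd
    have hrest : (fun i : Fin (n + 2) =>
        (fun i : Fin (n + 3) => if h : (i : ℕ) < n + 2 then d ⟨i, h⟩ else s) i.castSucc) = d := by
      funext i
      simp only [Fin.coe_castSucc, i.isLt, dif_pos]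
    refine ⟨?_, by simp, by rw [hrest]; exact hR⟩
    rw [mem_OPC_succ, hrest]
    refine ⟨hopc, ?_⟩
    simpa using hb
  · intro c hc
    simp only [Finset.mem_coe, Finset.mem_filter, mem_opcF] at hc
    funext i
    by_cases h : (i : ℕ) < n + 2
    · simp only [dif_pos h]
      exact congrArg c (Fin.ext rfl)
    · have hlt := i.isLt
      have hi : i = ⟨n + 2, by omega⟩ := Fin.ext (show (i : ℕ) = n + 2 by omega)
      simp only [dif_neg h]
      rw [hi]
      exact hc.2.1.symm
  · intro d hd
    funext i
    simp only [Fin.coe_castSucc, i.isLt, dif_pos]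

def sg (x : Fin 8) : Fin 8 := 7 - x

lemma sg_sg : ∀ x, sg (sg x) = x := by decide

lemma bad_sg : ∀ u v w, Bad u v w ↔ Bad (sg u) (sg v) (sg w) := by decide

lemma opc_sg {m : ℕ} {c : Fin m → Fin 8} (hc : c ∈ OPC m) :
    (fun i => sg (c i)) ∈ OPC m := by
  rw [mem_OPC] at hc ⊢
  intro i h hb
  exact hc i h ((bad_sg _ _ _).2 hb)

lemma sig {m : ℕ} (P Q : (Fin m → Fin 8) → Prop) [DecidablePred P] [DecidablePred Q]
    (h : ∀ c, P c ↔ Q (fun i => sg (c i))) :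
    ((opcF m).filter P).card = ((opcF m).filter Q).card := by
  have sgw : ∀ c : Fin m → Fin 8, (fun i => sg ((fun j => sg (c j)) i)) = c := by
    intro c; funext i; exact sg_sg _
  apply Finset.card_nbij' (fun c => fun i => sg (c i)) (fun c => fun i => sg (c i))
  · intro c hc
    simp only [Finset.mem_coe, Finset.mem_filter, mem_opcF] at hc ⊢
    exact ⟨opc_sg hc.1, (h c).1 hc.2⟩
  · intro c hc
    simp only [Finset.mem_coe, Finset.mem_filter, mem_opcF] at hc ⊢
    refine ⟨opc_sg hc.1, ?_⟩
    rw [h _, sgw c]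
    exact hc.2
  · intro c _; exact sgw c
  · intro c _; exact sgw c

def inA (x : Fin 8) : Prop := x = 0 ∨ x = 1 ∨ x = 4 ∨ x = 5

instance : DecidablePred inA := fun x => by unfold inA; infer_instance

def Nc (m : ℕ) : ℕ := (opcF m).card

def Fc (n : ℕ) (s : Fin 8) : ℕ :=
  ((opcF (n + 1)).filter (fun c => c ⟨n, by omega⟩ = s)).card

def Xc (n : ℕ) : ℕ :=
  ((opcF (n + 2)).filter
    (fun c => c ⟨n + 1, by omega⟩ = 2 ∧ inA (c ⟨n, by omega⟩))).card

def Zc (n : ℕ) : ℕ :=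
  ((opcF (n + 2)).filter
    (fun c => c ⟨n + 1, by omega⟩ = 5 ∧ ¬ inA (c ⟨n, by omega⟩))).card

def Wc (n : ℕ) : ℕ :=
  ((opcF (n + 1)).filter (fun c => inA (c ⟨n, by omega⟩))).card

lemma fact2 (n : ℕ) : Zc n = Xc n := by
  have key : ∀ x y : Fin 8, (x = 5 ∧ ¬ inA y) ↔ (sg x = 2 ∧ inA (sg y)) := by decide
  exact sig _ _ (fun c => key _ _)

lemma fact3 (n : ℕ) : 2 * Wc n = Nc (n + 1) := by
  have key : ∀ x : Fin 8, inA x ↔ ¬ inA (sg x) := by decide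
  have h1 : Wc n = ((opcF (n + 1)).filter (fun c => ¬ inA (c ⟨n, by omega⟩))).card :=
    sig _ _ (fun c => key _)
  have h2 := Finset.card_filter_add_card_filter_not
    (s := opcF (n + 1)) (fun c : Fin (n + 1) → Fin 8 => inA (c ⟨n, Nat.lt_succ_self n⟩))
  have h3 : Wc n = ((opcF (n + 1)).filter
      (fun c => inA (c ⟨n, Nat.lt_succ_self n⟩))).card := rfl
  have h4 : Nc (n + 1) = (opcF (n + 1)).card := rfl
  linarith

lemma badA : ∀ s, inA s → ∀ t u, (Bad s t u ↔ (t = 2 ∧ inA u)) := by decide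

lemma badB : ∀ s, ¬ inA s → ∀ t u, (Bad s t u ↔ (t = 5 ∧ ¬ inA u)) := by decide

lemma fact1 (n : ℕ) (s : Fin 8) :
    Fc (n + 2) s + ((opcF (n + 2)).filter
      (fun d => Bad s (d ⟨n + 1, by omega⟩) (d ⟨n, by omega⟩))).card = Nc (n + 2) := by
  have l1 : n + 2 < n + 3 := Nat.lt_succ_self _
  have l2 : n + 1 < n + 2 := Nat.lt_succ_self _
  have l3 : n < n + 2 := by omega
  have hpre := pre (n := n) s (fun _ => True)
  have e1 : Fc (n + 2) s = ((opcF (n + 3)).filter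
      (fun c => c ⟨n + 2, l1⟩ = s ∧ True)).card := by
    unfold Fc
    exact congrArg Finset.card (Finset.filter_congr (fun c _ => by simp))
  have e2 : ((opcF (n + 2)).filter
        (fun d => (fun _ => True) d ∧ ¬ Bad s (d ⟨n + 1, l2⟩) (d ⟨n, l3⟩))).card
      = ((opcF (n + 2)).filter
        (fun d => ¬ Bad s (d ⟨n + 1, l2⟩) (d ⟨n, l3⟩))).card :=
    congrArg Finset.card (Finset.filter_congr (fun c _ => by simp))
  have hsplit := Finset.card_filter_add_card_filter_not
    (s := opcF (n + 2)) (fun d : Fin (n + 2) → Fin 8 => Bad s (d ⟨n + 1, l2⟩) (d ⟨n, l3⟩))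
  have h4 : Nc (n + 2) = (opcF (n + 2)).card := rfl
  suffices h : ((opcF (n + 2)).filter
        (fun d => ¬ Bad s (d ⟨n + 1, l2⟩) (d ⟨n, l3⟩))).card +
      ((opcF (n + 2)).filter
        (fun d => Bad s (d ⟨n + 1, l2⟩) (d ⟨n, l3⟩))).card = Nc (n + 2) by
    rw [e1, hpre, e2]
    exact h
  linarith

lemma fact1A (n : ℕ) (s : Fin 8) (hs : inA s) : Fc (n + 2) s + Xc n = Nc (n + 2) := by
  have l2 : n + 1 < n + 2 := Nat.lt_succ_self _
  have l3 : n < n + 2 := by omega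
  have h := fact1 n s
  have e : ((opcF (n + 2)).filter
        (fun d => Bad s (d ⟨n + 1, l2⟩) (d ⟨n, l3⟩))).card =
      ((opcF (n + 2)).filter
        (fun d => d ⟨n + 1, l2⟩ = 2 ∧ inA (d ⟨n, l3⟩))).card :=
    congrArg Finset.card (Finset.filter_congr (fun c _ => badA s hs _ _))
  have e2 : Xc n = ((opcF (n + 2)).filter
      (fun d => d ⟨n + 1, l2⟩ = 2 ∧ inA (d ⟨n, l3⟩))).card := rfl
  suffices hh : Fc (n + 2) s + ((opcF (n + 2)).filter
      (fun d => Bad s (d ⟨n + 1, l2⟩) (d ⟨n, l3⟩))).card = Nc (n + 2) by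
    rw [e, ← e2] at hh
    exact hh
  exact h

lemma fact1B (n : ℕ) (s : Fin 8) (hs : ¬ inA s) : Fc (n + 2) s + Zc n = Nc (n + 2) := by
  have l2 : n + 1 < n + 2 := Nat.lt_succ_self _
  have l3 : n < n + 2 := by omega
  have h := fact1 n s
  have e : ((opcF (n + 2)).filter
        (fun d => Bad s (d ⟨n + 1, l2⟩) (d ⟨n, l3⟩))).card =
      ((opcF (n + 2)).filter
        (fun d => d ⟨n + 1, l2⟩ = 5 ∧ ¬ inA (d ⟨n, l3⟩))).card :=
    congrArg Finset.card (Finset.filter_congr (fun c _ => badB s hs _ _))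
  have e2 : Zc n = ((opcF (n + 2)).filter
      (fun d => d ⟨n + 1, l2⟩ = 5 ∧ ¬ inA (d ⟨n, l3⟩))).card := rfl
  suffices hh : Fc (n + 2) s + ((opcF (n + 2)).filter
      (fun d => Bad s (d ⟨n + 1, l2⟩) (d ⟨n, l3⟩))).card = Nc (n + 2) by
    rw [e, ← e2] at hh
    exact hh
  exact h

lemma fact4 (n : ℕ) : Xc (n + 1) + Zc n = Wc (n + 1) := by
  have l1 : n + 2 < n + 3 := Nat.lt_succ_self _
  have l2 : n + 1 < n + 2 := Nat.lt_succ_self _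
  have l3 : n < n + 2 := by omega
  have key2 : ∀ t u : Fin 8, (inA t ∧ (t = (5 : Fin 8) ∧ ¬ inA u)) ↔ (t = 5 ∧ ¬ inA u) := by
    decide
  have key3 : ∀ t u : Fin 8,
      (inA t ∧ ¬ (t = (5 : Fin 8) ∧ ¬ inA u)) ↔ (inA t ∧ ¬ Bad 2 t u) := by decide
  have hpre := pre (n := n) 2 (fun d => inA (d ⟨n + 1, l2⟩))
  have eXR : Xc (n + 1) = ((opcF (n + 2)).filter
      (fun d => inA (d ⟨n + 1, l2⟩) ∧ ¬ Bad 2 (d ⟨n + 1, l2⟩) (d ⟨n, l3⟩))).card := hpre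
  have eZ : Zc n = ((opcF (n + 2)).filter
      (fun d => d ⟨n + 1, l2⟩ = 5 ∧ ¬ inA (d ⟨n, l3⟩))).card := rfl
  have eW : Wc (n + 1) = ((opcF (n + 2)).filter (fun d => inA (d ⟨n + 1, l2⟩))).card := rfl
  have hsplit := Finset.card_filter_add_card_filter_not
    (s := (opcF (n + 2)).filter (fun d => inA (d ⟨n + 1, l2⟩)))
    (fun d : Fin (n + 2) → Fin 8 => d ⟨n + 1, l2⟩ = 5 ∧ ¬ inA (d ⟨n, l3⟩))
  rw [Finset.filter_filter, Finset.filter_filter] at hsplit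
  have e5 : ((opcF (n + 2)).filter
        (fun a => inA (a ⟨n + 1, l2⟩) ∧ (a ⟨n + 1, l2⟩ = 5 ∧ ¬ inA (a ⟨n, l3⟩)))).card
      = ((opcF (n + 2)).filter (fun d => d ⟨n + 1, l2⟩ = 5 ∧ ¬ inA (d ⟨n, l3⟩))).card :=
    congrArg Finset.card (Finset.filter_congr fun c _ => key2 _ _)
  have e6 : ((opcF (n + 2)).filter
        (fun a => inA (a ⟨n + 1, l2⟩) ∧ ¬ (a ⟨n + 1, l2⟩ = 5 ∧ ¬ inA (a ⟨n, l3⟩)))).card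
      = ((opcF (n + 2)).filter
        (fun d => inA (d ⟨n + 1, l2⟩) ∧ ¬ Bad 2 (d ⟨n + 1, l2⟩) (d ⟨n, l3⟩))).card :=
    congrArg Finset.card (Finset.filter_congr fun c _ => key3 _ _)
  rw [e5, e6] at hsplit
  rw [eXR, eZ, eW]
  linarith

lemma fact5 (n : ℕ) : Nc (n + 3) = ∑ s : Fin 8, Fc (n + 2) s := by
  have l1 : n + 2 < n + 3 := Nat.lt_succ_self _
  have h := Finset.card_eq_sum_card_fiberwise (s := opcF (n + 3))
    (t := (Finset.univ : Finset (Fin 8)))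
    (f := fun c => c ⟨n + 2, l1⟩) (fun c _ => Finset.mem_univ _)
  refine h.trans (Finset.sum_congr rfl fun s _ => ?_)
  rfl

lemma factR1 (n : ℕ) : Nc (n + 3) + 8 * Xc n = 8 * Nc (n + 2) := by
  have h := fact5 n
  rw [Fin.sum_univ_eight] at h
  have h0 := fact1A n 0 (by decide)
  have h1 := fact1A n 1 (by decide)
  have h4 := fact1A n 4 (by decide)
  have h5 := fact1A n 5 (by decide)
  have h2 := fact1B n 2 (by decide)
  have h3 := fact1B n 3 (by decide)
  have h6 := fact1B n 6 (by decide)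
  have h7 := fact1B n 7 (by decide)
  have hz := fact2 n
  linarith

lemma keyT : ∀ k : ℕ, Nc (k + 2) = 4 * Nc (k + 1) + 8 * Xc k := by
  intro k
  cases k with
  | zero =>
    have h1 : Nc 2 = 64 := by decide
    have h2 : Nc 1 = 8 := by decide
    have h3 : Xc 0 = 4 := by decide
    rw [h1, h2, h3]
  | succ j =>
    show Nc (j + 3) = 4 * Nc (j + 2) + 8 * Xc (j + 1)
    have hR := factR1 j
    have h4 := fact4 j
    have h2 := fact2 j
    have h3 := fact3 (j + 1)
    have h3' : 2 * Wc (j + 1) = Nc (j + 2) := h3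
    linarith

theorem stmt11 (m : ℕ) (hm : 3 ≤ m) :
    8 * {c ∈ OPC m | c ⟨m - 1, by omega⟩ = 0}.ncard =
      7 * (OPC (m - 1)).ncard + 4 * (OPC (m - 2)).ncard := by
  obtain ⟨k, rfl⟩ : ∃ k, m = k + 3 := ⟨m - 3, by omega⟩
  have l1 : k + 2 < k + 3 := Nat.lt_succ_self _
  have hset : {c ∈ OPC (k + 3) | c ⟨k + 3 - 1, by omega⟩ = 0}
      = ↑((opcF (k + 3)).filter (fun c => c ⟨k + 2, l1⟩ = (0 : Fin 8))) := by
    ext c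
    simp only [Set.mem_setOf_eq, Finset.coe_filter, mem_opcF]
    exact Iff.rfl
  rw [hset, Set.ncard_coe_finset]
  have e1 : (OPC (k + 3 - 1)).ncard = Nc (k + 2) := by
    rw [coe_opcF, Set.ncard_coe_finset]
    rfl
  have e2 : (OPC (k + 3 - 2)).ncard = Nc (k + 1) := by
    rw [coe_opcF, Set.ncard_coe_finset]
    rfl
  rw [e1, e2]
  have eF : ((opcF (k + 3)).filter (fun c => c ⟨k + 2, l1⟩ = (0 : Fin 8))).card
      = Fc (k + 2) 0 := rfl
  rw [eF]
  have hA := fact1A k 0 (by decide)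
  have hT := keyT k
  linarith
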